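/- For a bounded linear operator T on a Banach space X, the numerical radius satisfies ‖T‖_w = sup { |x*(Tx)| : x ∈ ext(B_X), x* ∈ ext(B_{X*}), x*(x) = 1 } whenever X is finite-dimensional (so that the unit balls are the closed convex hulls of their extreme points). -/

import Mathlib

open Set Metric

section Aux

variable {E : Type*} [NormedAddCommGroup E] [NormedSpace ℝ E]

/-- Bauer maximum principle (weak form): a continuous function on a nonempty compact set
that is midpoint-convex along segments attains its maximum at an extreme point. -/
lemma bauer_max_aux {s : Set E} (hs : IsCompact s) (hne : s.Nonempty)
    {φ : E → ℝ} (hφc : Continuous φ)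
    (hφ : ∀ x ∈ s, ∀ y ∈ s, ∀ a b : ℝ, 0 ≤ a → 0 ≤ b → a + b = 1 →
      φ (a • x + b • y) ≤ a * φ x + b * φ y) :
    ∃ p ∈ extremePoints ℝ s, ∀ y ∈ s, φ y ≤ φ p := by
  obtain ⟨z, hz, hmax⟩ := hs.exists_isMaxOn hne hφc.continuousOn
  set t : Set E := {y ∈ s | φ z ≤ φ y} with ht
  have htc : IsCompact t :=
    hs.of_isClosed_subset (hs.isClosed.inter (isClosed_le continuous_const hφc))
      (sep_subset _ _)
  have hext : IsExtreme ℝ s t := by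
    refine ⟨sep_subset _ _, ?_⟩
    rintro x1 hx1 x2 hx2 y ⟨hys, hyφ⟩ ⟨a, b, ha, hb, hab, rfl⟩
    have h1 : φ x1 ≤ φ z := hmax hx1
    have h2 : φ x2 ≤ φ z := hmax hx2
    have h3 := hφ x1 hx1 x2 hx2 a b ha.le hb.le hab
    have hz' : a * φ z + b * φ z = φ z := by rw [← add_mul, hab, one_mul]
    · refine ⟨hx1, le_of_not_gt fun hlt => ?_⟩
      have p1 : a * φ x1 < a * φ z := mul_lt_mul_of_pos_left hlt ha
      have p2 : b * φ x2 ≤ b * φ z := mul_le_mul_of_nonneg_left h2 hb.le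
      linarith
  obtain ⟨p, hp⟩ := htc.extremePoints_nonempty ⟨z, hz, le_rfl⟩
  exact ⟨p, hext.extremePoints_subset_extremePoints hp,
    fun y hy => (hmax hy).trans (extremePoints_subset hp).2⟩

lemma eq_one_of_re_eq_one {𝕜 : Type*} [RCLike 𝕜] {z : 𝕜}
    (h1 : ‖z‖ ≤ 1) (h2 : RCLike.re z = 1) : z = 1 := by
  have hsq : ‖z‖ ^ 2 = RCLike.re z * RCLike.re z + RCLike.im z * RCLike.im z := by
    rw [← RCLike.normSq_apply, RCLike.normSq_eq_def']
  have him : RCLike.im z = 0 := by nlinarith [norm_nonneg z]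
  apply RCLike.ext <;> simp [h2, him]

end Aux

set_option maxHeartbeats 2000000 in
/-- in a finite-dimensional Banach space, the numerical radius equals the
supremum of `|x*(Tx)|` over extreme points `x` of the unit ball and extreme points `x*`
of the dual unit ball with `x*(x) = 1`. -/
theorem numerical_radius_via_extreme_points (𝕜 X : Type*) [RCLike 𝕜]
    [NormedAddCommGroup X] [NormedSpace 𝕜 X] [FiniteDimensional 𝕜 X]
    [NormedSpace ℝ X] [IsScalarTower ℝ 𝕜 X]
    (T : X →L[𝕜] X) :
    sSup {r : ℝ | ∃ (x : X) (f : X →L[𝕜] 𝕜), ‖x‖ = 1 ∧ ‖f‖ = 1 ∧ f x = 1 ∧ r = ‖f (T x)‖}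
      = sSup {r : ℝ | ∃ (x : X) (f : X →L[𝕜] 𝕜),
          x ∈ Set.extremePoints ℝ (Metric.closedBall (0 : X) 1) ∧
          f ∈ Set.extremePoints ℝ (Metric.closedBall (0 : X →L[𝕜] 𝕜) 1) ∧
          f x = 1 ∧ r = ‖f (T x)‖} := by
  haveI : ProperSpace X := FiniteDimensional.proper 𝕜 X
  haveI : ProperSpace (X →L[𝕜] 𝕜) := FiniteDimensional.proper 𝕜 _
  set S1 : Set ℝ :=
    {r : ℝ | ∃ (x : X) (f : X →L[𝕜] 𝕜), ‖x‖ = 1 ∧ ‖f‖ = 1 ∧ f x = 1 ∧ r = ‖f (T x)‖} with hS1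
  set S2 : Set ℝ :=
    {r : ℝ | ∃ (x : X) (f : X →L[𝕜] 𝕜),
      x ∈ Set.extremePoints ℝ (Metric.closedBall (0 : X) 1) ∧
      f ∈ Set.extremePoints ℝ (Metric.closedBall (0 : X →L[𝕜] 𝕜) 1) ∧
      f x = 1 ∧ r = ‖f (T x)‖} with hS2
  -- both sets are bounded above by ‖T‖
  have bound : ∀ (x : X) (f : X →L[𝕜] 𝕜), ‖x‖ ≤ 1 → ‖f‖ ≤ 1 → ‖f (T x)‖ ≤ ‖T‖ := by
    intro x f hx hf
    have h1 : ‖f (T x)‖ ≤ ‖f‖ * ‖T x‖ := f.le_opNorm _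
    have h2 : ‖T x‖ ≤ ‖T‖ * ‖x‖ := T.le_opNorm _
    nlinarith [norm_nonneg (T x), norm_nonneg x, norm_nonneg f, norm_nonneg T,
      norm_nonneg (f (T x))]
  have bdd1 : BddAbove S1 := by
    refine ⟨‖T‖, ?_⟩
    rintro r ⟨x, f, hx, hf, _, rfl⟩
    exact bound x f hx.le hf.le
  have bdd2 : BddAbove S2 := by
    refine ⟨‖T‖, ?_⟩
    rintro r ⟨x, f, hx, hf, _, rfl⟩
    have hx1 : ‖x‖ ≤ 1 := by
      simpa using mem_closedBall_zero_iff.mp (extremePoints_subset hx)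
    have hf1 : ‖f‖ ≤ 1 := by
      simpa using mem_closedBall_zero_iff.mp (extremePoints_subset hf)
    exact bound x f hx1 hf1
  -- S2 ⊆ S1
  have hsub : S2 ⊆ S1 := by
    rintro r ⟨x, f, hx, hf, hfx, rfl⟩
    have hx1 : ‖x‖ ≤ 1 := by
      simpa using mem_closedBall_zero_iff.mp (extremePoints_subset hx)
    have hf1 : ‖f‖ ≤ 1 := by
      simpa using mem_closedBall_zero_iff.mp (extremePoints_subset hf)
    have hge : (1 : ℝ) ≤ ‖f‖ * ‖x‖ := by
      have := f.le_opNorm x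
      rw [hfx] at this
      simpa using this
    have hxn : ‖x‖ = 1 := by nlinarith [norm_nonneg x, norm_nonneg f]
    have hfn : ‖f‖ = 1 := by nlinarith [norm_nonneg x, norm_nonneg f]
    exact ⟨x, f, hxn, hfn, hfx, rfl⟩
  -- key step: every element of S1 is dominated by an element of S2
  have key : ∀ r ∈ S1, ∃ r' ∈ S2, r ≤ r' := by
    rintro r ⟨x, f, hx, hf, hfx, rfl⟩
    -- first face: maximize Re ∘ f on the unit ball of X
    set g : X →L[ℝ] ℝ := RCLike.reCLM.comp (f.restrictScalars ℝ) with hg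
    have hgval : ∀ y : X, g y = RCLike.re (f y) := fun y => rfl
    have hE1exp : IsExposed ℝ (closedBall (0 : X) 1) (g.toExposed (closedBall (0 : X) 1)) :=
      ContinuousLinearMap.toExposed.isExposed
    have hxball : x ∈ closedBall (0 : X) 1 := by
      rw [mem_closedBall_zero_iff, hx]
    have hgx : g x = 1 := by rw [hgval, hfx]; simp
    have hxE1 : x ∈ g.toExposed (closedBall (0 : X) 1) := by
      refine ⟨hxball, fun y hy => ?_⟩
      have h1 : RCLike.re (f y) ≤ ‖f y‖ := RCLike.re_le_norm _
      have h2 : ‖f y‖ ≤ ‖f‖ * ‖y‖ := f.le_opNorm _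
      have h3 : ‖y‖ ≤ 1 := mem_closedBall_zero_iff.mp hy
      rw [hgval, hgx]
      nlinarith [norm_nonneg (f y)]
    have hE1c : IsCompact (g.toExposed (closedBall (0 : X) 1)) :=
      hE1exp.isCompact (isCompact_closedBall _ _)
    have hconv1 : ∀ y1 ∈ g.toExposed (closedBall (0 : X) 1),
        ∀ y2 ∈ g.toExposed (closedBall (0 : X) 1), ∀ a b : ℝ, 0 ≤ a → 0 ≤ b → a + b = 1 →
        ‖f (T (a • y1 + b • y2))‖ ≤ a * ‖f (T y1)‖ + b * ‖f (T y2)‖ := by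
      intro y1 _ y2 _ a b ha hb _
      have heq : f (T (a • y1 + b • y2)) = a • f (T y1) + b • f (T y2) := by
        rw [map_add, ContinuousLinearMap.map_smul_of_tower, ContinuousLinearMap.map_smul_of_tower,
          map_add, ContinuousLinearMap.map_smul_of_tower, ContinuousLinearMap.map_smul_of_tower]
      rw [heq]
      calc ‖a • f (T y1) + b • f (T y2)‖ ≤ ‖a • f (T y1)‖ + ‖b • f (T y2)‖ := norm_add_le _ _
        _ = a * ‖f (T y1)‖ + b * ‖f (T y2)‖ := by
            rw [norm_smul, norm_smul, Real.norm_of_nonneg ha, Real.norm_of_nonneg hb]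
    have hcont1 : Continuous fun y : X => ‖f (T y)‖ := by fun_prop
    obtain ⟨x₀, hx₀ext, hx₀max⟩ := bauer_max_aux (φ := fun y : X => ‖f (T y)‖)
      hE1c ⟨x, hxE1⟩ hcont1 hconv1
    have hx₀E1 : x₀ ∈ g.toExposed (closedBall (0 : X) 1) := extremePoints_subset hx₀ext
    have hx₀ball : ‖x₀‖ ≤ 1 := mem_closedBall_zero_iff.mp hx₀E1.1
    have hx₀extball : x₀ ∈ extremePoints ℝ (closedBall (0 : X) 1) :=
      hE1exp.isExtreme.extremePoints_subset_extremePoints hx₀ext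
    -- f x₀ = 1
    have hre : RCLike.re (f x₀) = 1 := by
      have hge : (1 : ℝ) ≤ g x₀ := by rw [← hgx]; exact hx₀E1.2 x hxball
      have hle : RCLike.re (f x₀) ≤ ‖f x₀‖ := RCLike.re_le_norm _
      have h2 : ‖f x₀‖ ≤ ‖f‖ * ‖x₀‖ := f.le_opNorm _
      rw [hgval] at hge
      nlinarith [norm_nonneg (f x₀)]
    have hfx₀norm : ‖f x₀‖ ≤ 1 := by
      have h2 : ‖f x₀‖ ≤ ‖f‖ * ‖x₀‖ := f.le_opNorm _
      nlinarith
    have hfx₀ : f x₀ = 1 := eq_one_of_re_eq_one hfx₀norm hre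
    -- second face: maximize Re (· x₀) on the unit ball of the dual
    set ℓ : (X →L[𝕜] 𝕜) →L[ℝ] ℝ :=
      RCLike.reCLM.comp ((ContinuousLinearMap.apply 𝕜 𝕜 x₀).restrictScalars ℝ) with hℓ
    have hℓval : ∀ h : X →L[𝕜] 𝕜, ℓ h = RCLike.re (h x₀) := fun h => rfl
    have hE2exp : IsExposed ℝ (closedBall (0 : X →L[𝕜] 𝕜) 1)
        (ℓ.toExposed (closedBall (0 : X →L[𝕜] 𝕜) 1)) :=
      ContinuousLinearMap.toExposed.isExposed
    have hfball : f ∈ closedBall (0 : X →L[𝕜] 𝕜) 1 := by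
      rw [mem_closedBall_zero_iff, hf]
    have hℓf : ℓ f = 1 := by rw [hℓval, hfx₀]; simp
    have hfE2 : f ∈ ℓ.toExposed (closedBall (0 : X →L[𝕜] 𝕜) 1) := by
      refine ⟨hfball, fun h hh => ?_⟩
      have h1 : RCLike.re (h x₀) ≤ ‖h x₀‖ := RCLike.re_le_norm _
      have h2 : ‖h x₀‖ ≤ ‖h‖ * ‖x₀‖ := h.le_opNorm _
      have h3 : ‖h‖ ≤ 1 := mem_closedBall_zero_iff.mp hh
      rw [hℓval, hℓf]
      nlinarith [norm_nonneg (h x₀), norm_nonneg h]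
    have hE2c : IsCompact (ℓ.toExposed (closedBall (0 : X →L[𝕜] 𝕜) 1)) :=
      hE2exp.isCompact (isCompact_closedBall _ _)
    have hconv2 : ∀ g1 ∈ ℓ.toExposed (closedBall (0 : X →L[𝕜] 𝕜) 1),
        ∀ g2 ∈ ℓ.toExposed (closedBall (0 : X →L[𝕜] 𝕜) 1),
        ∀ a b : ℝ, 0 ≤ a → 0 ≤ b → a + b = 1 →
        ‖(a • g1 + b • g2) (T x₀)‖ ≤ a * ‖g1 (T x₀)‖ + b * ‖g2 (T x₀)‖ := by
      intro g1 _ g2 _ a b ha hb _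
      have heq : (a • g1 + b • g2) (T x₀) = a • g1 (T x₀) + b • g2 (T x₀) := by
        simp
      rw [heq]
      calc ‖a • g1 (T x₀) + b • g2 (T x₀)‖ ≤ ‖a • g1 (T x₀)‖ + ‖b • g2 (T x₀)‖ :=
            norm_add_le _ _
        _ = a * ‖g1 (T x₀)‖ + b * ‖g2 (T x₀)‖ := by
            rw [norm_smul, norm_smul, Real.norm_of_nonneg ha, Real.norm_of_nonneg hb]
    have hcont2 : Continuous fun h : X →L[𝕜] 𝕜 => ‖h (T x₀)‖ := by fun_prop
    obtain ⟨f₀, hf₀ext, hf₀max⟩ := bauer_max_aux (φ := fun h : X →L[𝕜] 𝕜 => ‖h (T x₀)‖)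
      hE2c ⟨f, hfE2⟩ hcont2 hconv2
    have hf₀E2 : f₀ ∈ ℓ.toExposed (closedBall (0 : X →L[𝕜] 𝕜) 1) :=
      extremePoints_subset hf₀ext
    have hf₀ball : ‖f₀‖ ≤ 1 := mem_closedBall_zero_iff.mp hf₀E2.1
    have hf₀extball : f₀ ∈ extremePoints ℝ (closedBall (0 : X →L[𝕜] 𝕜) 1) :=
      hE2exp.isExtreme.extremePoints_subset_extremePoints hf₀ext
    have hre₀ : RCLike.re (f₀ x₀) = 1 := by
      have hge : (1 : ℝ) ≤ ℓ f₀ := by rw [← hℓf]; exact hf₀E2.2 f hfball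
      have hle : RCLike.re (f₀ x₀) ≤ ‖f₀ x₀‖ := RCLike.re_le_norm _
      have h2 : ‖f₀ x₀‖ ≤ ‖f₀‖ * ‖x₀‖ := f₀.le_opNorm _
      rw [hℓval] at hge
      nlinarith [norm_nonneg (f₀ x₀), mul_le_mul hf₀ball hx₀ball (norm_nonneg x₀) zero_le_one]
    have hf₀x₀norm : ‖f₀ x₀‖ ≤ 1 := by
      have h2 : ‖f₀ x₀‖ ≤ ‖f₀‖ * ‖x₀‖ := f₀.le_opNorm _
      nlinarith [mul_le_mul hf₀ball hx₀ball (norm_nonneg x₀) zero_le_one]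
    have hf₀x₀ : f₀ x₀ = 1 := eq_one_of_re_eq_one hf₀x₀norm hre₀
    refine ⟨‖f₀ (T x₀)‖, ⟨x₀, f₀, hx₀extball, hf₀extball, hf₀x₀, rfl⟩, ?_⟩
    calc ‖f (T x)‖ ≤ ‖f (T x₀)‖ := hx₀max x hxE1
      _ ≤ ‖f₀ (T x₀)‖ := hf₀max f hfE2
  -- assemble
  apply le_antisymm
  · apply Real.sSup_le
    · intro r hr
      obtain ⟨r', hr', hle⟩ := key r hr
      exact hle.trans (le_csSup bdd2 hr')
    · apply Real.sSup_nonneg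
      rintro r ⟨x, f, _, _, _, rfl⟩
      positivity
  · apply Real.sSup_le
    · intro r hr
      exact le_csSup bdd1 (hsub hr)
    · apply Real.sSup_nonneg
      rintro r ⟨x, f, _, _, _, rfl⟩
      positivity
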